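/- arXiv:math/0602206 — 2 statements merged into one kernel-verified Lean document; each statement's English description precedes it below -/
import Mathlib

section
/- In Ǔ'_q(sp_{2n}), for any odd index i and any indices j ≤ i, b ≤ j, the element s_ii commutes with s_jb: s_ii s_jb = s_jb s_ii. -/
noncomputable section

/-- Generators `s_ij` (1 ≤ i,j ≤ 2n, 0-indexed here) and the inverses
`s_{2k-1,2k}⁻¹` (paper-odd rows, here `sInv k` for `k : Fin n`) of the twisted
quantized enveloping algebra the extended twisted quantized enveloping algebra `Ǔ'_q(sp_{2n})`. -/
inductive SpGen (n : ℕ) where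
  | s (i j : Fin (2 * n))
  | sInv (k : Fin n)

/-- The generator `s_ij` inside the free algebra. -/
def Sg (n : ℕ) (i j : Fin (2 * n)) : FreeAlgebra ℂ (SpGen n) := FreeAlgebra.ι ℂ (SpGen.s i j)

/-- The generator `s_{2k-1,2k}⁻¹` inside the free algebra. -/
def SIg (n : ℕ) (k : Fin n) : FreeAlgebra ℂ (SpGen n) := FreeAlgebra.ι ℂ (SpGen.sInv k)

/-- The 0-indexed version of the paper's odd index `2k−1`. -/
def lo {n : ℕ} (k : Fin n) : Fin (2 * n) := ⟨2 * k.val, by have := k.isLt; omega⟩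

/-- The 0-indexed version of the paper's even index `2k`. -/
def hi {n : ℕ} (k : Fin n) : Fin (2 * n) := ⟨2 * k.val + 1, by have := k.isLt; omega⟩

/-- `q^{δ_ab}`: equals `q` if `a = b` and `1` otherwise. -/
def qd (q : ℂ) {m : ℕ} (a b : Fin m) : ℂ := if a = b then q else 1

/-- `δ_{a<b}`: equals `1` if `a < b` and `0` otherwise. -/
def dlt {m : ℕ} (a b : Fin m) : ℂ := if a < b then 1 else 0

/-- `δ_{a<b<c}`: equals `1` if `a < b < c` and `0` otherwise. -/
def dlt3 {m : ℕ} (a b c : Fin m) : ℂ := if a < b ∧ b < c then 1 else 0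

/-- The defining relations of the twisted quantized enveloping algebra
the extended twisted quantized enveloping algebra `Ǔ'_q(sp_{2n})`: vanishing of `s_ij` above the block diagonal, invertibility
of the `s_{2k-1,2k}`, the component form of the reflection equation
`R S₁ R' S₂ = S₂ R' S₁ R`, and the relations
`s_{i+1,i+1} s_ii − q² s_{i+1,i} s_{i,i+1} = q³` for (paper-)odd `i`. -/
inductive SpRelExt (q : ℂ) (n : ℕ) :
    FreeAlgebra ℂ (SpGen n) → FreeAlgebra ℂ (SpGen n) → Prop where
  | s_zero (i j : Fin (2 * n))
      (h : (j.val = i.val + 1 ∧ i.val % 2 = 1) ∨ i.val + 2 ≤ j.val) :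
      SpRelExt q n (Sg n i j) 0
  | inv_right (k : Fin n) : SpRelExt q n (Sg n (lo k) (hi k) * SIg n k) 1
  | inv_left (k : Fin n) : SpRelExt q n (SIg n k * Sg n (lo k) (hi k)) 1
  | reflection (i j a b : Fin (2 * n)) :
      SpRelExt q n
        ((qd q a j * qd q i j) • (Sg n i a * Sg n j b)
          - (qd q a b * qd q i b) • (Sg n j b * Sg n i a))
        (((q - q⁻¹) * qd q a i * (dlt b a - dlt i j)) • (Sg n j a * Sg n i b)
          + (q - q⁻¹) • ((qd q a b * dlt b i) • (Sg n j i * Sg n b a)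
              - (qd q i j * dlt a j) • (Sg n i j * Sg n a b))
          + ((q - q⁻¹) ^ 2 * (dlt3 b a i - dlt3 a i j)) • (Sg n j i * Sg n a b))

/-- The twisted quantized enveloping algebra the extended twisted quantized enveloping algebra `Ǔ'_q(sp_{2n})`. -/
abbrev Usp (q : ℂ) (n : ℕ) := RingQuot (SpRelExt q n)

/-- The generator `s_ij` of the extended twisted quantized enveloping algebra `Ǔ'_q(sp_{2n})`. -/
def S (q : ℂ) (n : ℕ) (i j : Fin (2 * n)) : Usp q n :=
  RingQuot.mkAlgHom ℂ (SpRelExt q n) (Sg n i j)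

/-- The generator `s_{2k-1,2k}⁻¹` of the extended twisted quantized enveloping algebra `Ǔ'_q(sp_{2n})`. -/
def SInv (q : ℂ) (n : ℕ) (k : Fin n) : Usp q n :=
  RingQuot.mkAlgHom ℂ (SpRelExt q n) (SIg n k)


lemma S_upper_zero (q : ℂ) (n : ℕ) (k : Fin n) (b : Fin (2 * n)) (hb : b < lo k) :
    S q n b (lo k) = 0 := by
  have hb' : b.val < 2 * k.val := hb
  have h : ((lo k).val = b.val + 1 ∧ b.val % 2 = 1) ∨ b.val + 2 ≤ (lo k).val := by
    simp only [lo]; omega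
  have := RingQuot.mkAlgHom_rel ℂ (SpRelExt.s_zero (q := q) b (lo k) h)
  simpa [S] using this

lemma refl_eq (q : ℂ) (n : ℕ) (i j a b : Fin (2 * n)) :
    (qd q a j * qd q i j) • (S q n i a * S q n j b)
      - (qd q a b * qd q i b) • (S q n j b * S q n i a)
    = ((q - q⁻¹) * qd q a i * (dlt b a - dlt i j)) • (S q n j a * S q n i b)
      + (q - q⁻¹) • ((qd q a b * dlt b i) • (S q n j i * S q n b a)
          - (qd q i j * dlt a j) • (S q n i j * S q n a b))
      + ((q - q⁻¹) ^ 2 * (dlt3 b a i - dlt3 a i j)) • (S q n j i * S q n a b) := by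
  have := RingQuot.mkAlgHom_rel ℂ (SpRelExt.reflection (q := q) i j a b)
  simpa [S, map_sub, map_add, map_mul, map_smul] using this

/-- In `Ǔ'_q(sp_{2n})`, for any paper-odd index `i = lo k` and any indices
`j ≤ i`, `b ≤ j`, the element `s_ii` commutes with `s_jb`. -/
theorem s_odd_diag_commutes (q : ℂ) (hq : q ≠ 0) (hq2 : q ^ 2 ≠ 1) (n : ℕ)
    (k : Fin n) (j b : Fin (2 * n)) (hj : j ≤ lo k) (hb : b ≤ j) :
    S q n (lo k) (lo k) * S q n j b = S q n j b * S q n (lo k) (lo k) := by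
  rcases eq_or_lt_of_le hj with hji | hji
  · -- j = lo k
    subst hji
    rcases eq_or_lt_of_le hb with hbj | hbj
    · subst hbj; rfl
    · -- b < j
      have hz : S q n b (lo k) = 0 := S_upper_zero q n k b hbj
      have E := refl_eq q n (lo k) (lo k) (lo k) b
      simp [qd, dlt, dlt3, hz, hbj, hbj.ne', lt_irrefl, not_lt.mpr hbj.le] at E
      have hc : q * q - (q - q⁻¹) * q = 1 := by field_simp; ring
      have h2 : S q n (lo k) b * S q n (lo k) (lo k)
          = (q * q - (q - q⁻¹) * q) • (S q n (lo k) (lo k) * S q n (lo k) b) := by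
        linear_combination (norm := module) -E
      rw [hc, one_smul] at h2
      exact h2.symm
  · -- j < lo k
    have hz : S q n j (lo k) = 0 := S_upper_zero q n k j hji
    have hbi : b < lo k := lt_of_le_of_lt hb hji
    have E := refl_eq q n (lo k) j (lo k) b
    simp [qd, dlt, dlt3, hz, hji.ne', hbi.ne', not_lt.mpr hji.le] at E
    exact sub_eq_zero.mp E

end
end

section
/- With q nonzero and not a root of unity, the irreducible highest weight module L(λ) over U'_q(sp₂) is finite-dimensional if and only if λ = σ q^m for some positive integer m and σ ∈ {−1, 1}; in that case dim L(λ) = m. -/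
noncomputable section

/-- Generators `s₁₁, s₂₂, s₁₂, s₁₂⁻¹` of `U'_q(sp₂)`. -/
inductive Sp2Gen where
  | s11 | s22 | s12 | s12inv

/-- The defining relations of `U'_q(sp₂)`:
`s₁₂ s₁₂⁻¹ = s₁₂⁻¹ s₁₂ = 1`,
`s₁₁ s₂₂ = q⁻² s₂₂ s₁₁ − (q − q⁻¹)(s₁₂² − q²)`,
`s₁₂ s₁₁ = q² s₁₁ s₁₂` and `s₁₂ s₂₂ = q⁻² s₂₂ s₁₂`. -/
inductive Sp2Rel (q : ℂ) : FreeAlgebra ℂ Sp2Gen → FreeAlgebra ℂ Sp2Gen → Prop where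
  | inv_right : Sp2Rel q (FreeAlgebra.ι ℂ Sp2Gen.s12 * FreeAlgebra.ι ℂ Sp2Gen.s12inv) 1
  | inv_left : Sp2Rel q (FreeAlgebra.ι ℂ Sp2Gen.s12inv * FreeAlgebra.ι ℂ Sp2Gen.s12) 1
  | main :
      Sp2Rel q (FreeAlgebra.ι ℂ Sp2Gen.s11 * FreeAlgebra.ι ℂ Sp2Gen.s22)
        ((q ^ 2)⁻¹ • (FreeAlgebra.ι ℂ Sp2Gen.s22 * FreeAlgebra.ι ℂ Sp2Gen.s11)
          - (q - q⁻¹) • ((FreeAlgebra.ι ℂ Sp2Gen.s12) ^ 2 - (q ^ 2 : ℂ) • 1))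
  | r12_11 :
      Sp2Rel q (FreeAlgebra.ι ℂ Sp2Gen.s12 * FreeAlgebra.ι ℂ Sp2Gen.s11)
        ((q ^ 2) • (FreeAlgebra.ι ℂ Sp2Gen.s11 * FreeAlgebra.ι ℂ Sp2Gen.s12))
  | r12_22 :
      Sp2Rel q (FreeAlgebra.ι ℂ Sp2Gen.s12 * FreeAlgebra.ι ℂ Sp2Gen.s22)
        ((q ^ 2)⁻¹ • (FreeAlgebra.ι ℂ Sp2Gen.s22 * FreeAlgebra.ι ℂ Sp2Gen.s12))

/-- The twisted quantized enveloping algebra `U'_q(sp₂)`. -/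
abbrev Usp2 (q : ℂ) := RingQuot (Sp2Rel q)

/-- The generator `s₁₁` of `U'_q(sp₂)`. -/
def s11 (q : ℂ) : Usp2 q := RingQuot.mkAlgHom ℂ (Sp2Rel q) (FreeAlgebra.ι ℂ Sp2Gen.s11)

/-- The generator `s₂₂` of `U'_q(sp₂)`. -/
def s22 (q : ℂ) : Usp2 q := RingQuot.mkAlgHom ℂ (Sp2Rel q) (FreeAlgebra.ι ℂ Sp2Gen.s22)

/-- The generator `s₁₂` of `U'_q(sp₂)`. -/
def s12 (q : ℂ) : Usp2 q := RingQuot.mkAlgHom ℂ (Sp2Rel q) (FreeAlgebra.ι ℂ Sp2Gen.s12)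

/-- The generator `s₁₂⁻¹` of `U'_q(sp₂)`. -/
def s12inv (q : ℂ) : Usp2 q := RingQuot.mkAlgHom ℂ (Sp2Rel q) (FreeAlgebra.ι ℂ Sp2Gen.s12inv)


variable {q : ℂ}

lemma rel_inv_left : s12inv q * s12 q = 1 := by
  have h := RingQuot.mkAlgHom_rel ℂ (Sp2Rel.inv_left (q := q))
  simpa [s12, s12inv, map_mul] using h

lemma rel_inv_right : s12 q * s12inv q = 1 := by
  have h := RingQuot.mkAlgHom_rel ℂ (Sp2Rel.inv_right (q := q))
  simpa [s12, s12inv, map_mul] using h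

lemma rel_main : s11 q * s22 q =
    (q ^ 2)⁻¹ • (s22 q * s11 q) - (q - q⁻¹) • ((s12 q) ^ 2 - (q ^ 2 : ℂ) • 1) := by
  have h := RingQuot.mkAlgHom_rel ℂ (Sp2Rel.main (q := q))
  simpa [s11, s22, s12, map_mul, map_sub, map_smul, map_pow, map_one] using h

lemma rel_ta : s12 q * s11 q = (q ^ 2) • (s11 q * s12 q) := by
  have h := RingQuot.mkAlgHom_rel ℂ (Sp2Rel.r12_11 (q := q))
  simpa [s11, s12, map_mul, map_smul] using h

lemma rel_tb : s12 q * s22 q = (q ^ 2)⁻¹ • (s22 q * s12 q) := by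
  have h := RingQuot.mkAlgHom_rel ℂ (Sp2Rel.r12_22 (q := q))
  simpa [s22, s12, map_mul, map_smul] using h

variable {L : Type} [AddCommGroup L] [Module ℂ L] [Module (Usp2 q) L]
    [IsScalarTower ℂ (Usp2 q) L]

lemma usmul_csmul (u : Usp2 q) (c : ℂ) (x : L) : u • (c • x) = c • (u • x) := by
  rw [← IsScalarTower.algebraMap_smul (Usp2 q) c x, ← mul_smul, ← Algebra.commutes,
    mul_smul, IsScalarTower.algebraMap_smul]

/-- scalar multiplication by `u` as a `ℂ`-linear map -/
def lsmulU (u : Usp2 q) : L →ₗ[ℂ] L where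
  toFun x := u • x
  map_add' x y := smul_add u x y
  map_smul' c x := usmul_csmul u c x

lemma stable (N : Submodule ℂ L)
    (h1 : ∀ x ∈ N, s11 q • x ∈ N) (h2 : ∀ x ∈ N, s22 q • x ∈ N)
    (h3 : ∀ x ∈ N, s12 q • x ∈ N) (h4 : ∀ x ∈ N, s12inv q • x ∈ N) :
    ∀ (u : Usp2 q), ∀ x ∈ N, u • x ∈ N := by
  have key : ∀ a : FreeAlgebra ℂ Sp2Gen, ∀ x ∈ N,
      (RingQuot.mkAlgHom ℂ (Sp2Rel q) a) • x ∈ N := by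
    intro a
    induction a using FreeAlgebra.induction with
    | grade0 c =>
        intro x hx
        rw [AlgHom.commutes, algebraMap_smul]
        exact N.smul_mem c hx
    | grade1 g => cases g <;> assumption
    | mul a b ha hb =>
        intro x hx
        rw [map_mul, mul_smul]
        exact ha _ (hb _ hx)
    | add a b ha hb =>
        intro x hx
        rw [map_add, add_smul]
        exact N.add_mem (ha _ hx) (hb _ hx)
  intro u
  obtain ⟨a, rfl⟩ := RingQuot.mkAlgHom_surjective ℂ _ u
  exact key a

/-- `q^{-2}` -/
def pp (q : ℂ) : ℂ := (q ^ 2)⁻¹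

/-- the eigenvalue of `s₁₂` on `v n` -/
def μμ (q lam : ℂ) (n : ℕ) : ℂ := (pp q) ^ n * lam

/-- the coefficient in `s₁₁ • v n = c n • v (n-1)` -/
def cc (q lam : ℂ) (n : ℕ) : ℂ := q ^ 3 * ((pp q) ^ n * lam ^ 2 - 1) * ((pp q) ^ n - 1)

lemma pp_ne_zero (hq : q ≠ 0) : pp q ≠ 0 := by
  simp [pp, pow_ne_zero, hq]

lemma cc_zero (lam : ℂ) : cc q lam 0 = 0 := by simp [cc]

lemma cc_succ (hq : q ≠ 0) (lam : ℂ) (n : ℕ) :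
    cc q lam (n + 1) = pp q * cc q lam n - (q - q⁻¹) * ((μμ q lam n) ^ 2 - q ^ 2) := by
  have key : ∀ x : ℂ, q ^ 3 * ((x * (q ^ 2)⁻¹) * lam ^ 2 - 1) * ((x * (q ^ 2)⁻¹) - 1)
      = (q ^ 2)⁻¹ * (q ^ 3 * (x * lam ^ 2 - 1) * (x - 1)) - (q - q⁻¹) * ((x * lam) ^ 2 - q ^ 2) := by
    intro x
    field_simp
    ring
  unfold cc μμ pp
  rw [pow_succ]
  exact key _

lemma pp_pow_eq_one (hq : q ≠ 0) (hroot : ∀ m : ℕ, 0 < m → q ^ m ≠ 1)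
    {k : ℕ} (h : (pp q) ^ k = 1) : k = 0 := by
  by_contra hk
  have hk' : 0 < k := Nat.pos_of_ne_zero hk
  have h2 : (q ^ 2) ^ k = 1 := by
    have := congrArg (·⁻¹) h
    simpa [pp, ← inv_pow] using this
  exact hroot (2 * k) (by omega) (by rw [pow_mul]; exact h2)

lemma μμ_ne_zero (hq : q ≠ 0) (hlam : lam ≠ 0) (n : ℕ) : μμ q lam n ≠ 0 :=
  mul_ne_zero (pow_ne_zero _ (pp_ne_zero hq)) hlam

lemma μμ_inj (hq : q ≠ 0) (hlam : lam ≠ 0)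
    (hroot : ∀ m : ℕ, 0 < m → q ^ m ≠ 1) : Function.Injective (μμ q lam) := by
  have key : ∀ a b : ℕ, a ≤ b → μμ q lam a = μμ q lam b → a = b := by
    intro a b hab h
    have hp : (pp q) ^ a = (pp q) ^ b := mul_right_cancel₀ hlam h
    have : (pp q) ^ a * (pp q) ^ (b - a) = (pp q) ^ a * 1 := by
      rw [mul_one, ← pow_add]
      rw [hp]; congr 1; omega
    have := mul_left_cancel₀ (pow_ne_zero _ (pp_ne_zero hq)) this
    have := pp_pow_eq_one hq hroot this
    omega
  intro a b h
  rcases le_total a b with hab | hab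
  · exact key a b hab h
  · exact (key b a hab h.symm).symm

lemma cc_eq_zero_iff (hq : q ≠ 0) (hroot : ∀ m : ℕ, 0 < m → q ^ m ≠ 1)
    (lam : ℂ) {m : ℕ} (hm : 0 < m) :
    cc q lam m = 0 ↔ (lam = q ^ m ∨ lam = -q ^ m) := by
  have hq3 : (q : ℂ) ^ 3 ≠ 0 := pow_ne_zero _ hq
  have hppm : (pp q) ^ m ≠ 0 := pow_ne_zero _ (pp_ne_zero hq)
  have hfact : (pp q) ^ m * (q ^ m) ^ 2 = 1 := by
    rw [pp, ← inv_pow, ← pow_mul, ← pow_mul, mul_comm m 2, inv_pow]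
    exact inv_mul_cancel₀ (pow_ne_zero _ hq)
  constructor
  · intro h
    rcases mul_eq_zero.1 h with h' | h'
    · rcases mul_eq_zero.1 h' with h'' | h''
      · exact absurd h'' hq3
      · -- pp^m * lam^2 = 1, so lam^2 = (q^m)^2
        have hl2 : lam ^ 2 = (q ^ m) ^ 2 := by
          have h1 : (pp q) ^ m * lam ^ 2 = 1 := by linear_combination h''
          have := h1.trans hfact.symm
          exact mul_left_cancel₀ hppm this
        have : (lam - q ^ m) * (lam + q ^ m) = 0 := by linear_combination hl2
        rcases mul_eq_zero.1 this with h | h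
        · exact Or.inl (by linear_combination h)
        · exact Or.inr (by linear_combination h)
    · exfalso
      have : (pp q) ^ m = 1 := by linear_combination h'
      exact hm.ne' (pp_pow_eq_one hq hroot this)
  · intro h
    have hl2 : lam ^ 2 = (q ^ m) ^ 2 := by
      rcases h with h | h <;> rw [h] <;> ring
    unfold cc
    rw [hl2, hfact]
    ring

/-- Lift a `ℂ`-submodule stable under the `Usp2 q`-action to a `Usp2 q`-submodule. -/
def liftSub (N : Submodule ℂ L) (h : ∀ u : Usp2 q, ∀ x ∈ N, u • x ∈ N) :
    Submodule (Usp2 q) L where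
  carrier := N
  add_mem' := fun ha hb => N.add_mem ha hb
  zero_mem' := N.zero_mem
  smul_mem' := fun u x hx => h u x hx

lemma mem_liftSub {N : Submodule ℂ L} {h : ∀ u : Usp2 q, ∀ x ∈ N, u • x ∈ N} {x : L} :
    x ∈ liftSub N h ↔ x ∈ N := Iff.rfl

theorem sp2_fd_iff' (q : ℂ) (hq : q ≠ 0) (hroot : ∀ m : ℕ, 0 < m → q ^ m ≠ 1)
    (lam : ℂ) (hlam : lam ≠ 0)
    (L : Type) [AddCommGroup L] [Module ℂ L] [Module (Usp2 q) L]
    [IsScalarTower ℂ (Usp2 q) L]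
    (hsimple : IsSimpleModule (Usp2 q) L)
    (ξ : L) (hξ : ξ ≠ 0) (h11 : s11 q • ξ = 0) (h12 : s12 q • ξ = lam • ξ) :
    (FiniteDimensional ℂ L ↔ ∃ m : ℕ, 0 < m ∧ (lam = q ^ m ∨ lam = -q ^ m)) ∧
    ∀ m : ℕ, 0 < m → (lam = q ^ m ∨ lam = -q ^ m) → FiniteDimensional ℂ L →
      Module.finrank ℂ L = m := by
  classical
  set v : ℕ → L := fun n => ((s22 q) ^ n : Usp2 q) • ξ with hv
  have hv0 : v 0 = ξ := by simp [hv]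
  have hvsucc : ∀ n, v (n + 1) = s22 q • v n := by
    intro n
    simp only [hv, pow_succ', mul_smul]
  -- s12 acts diagonally
  have ht : ∀ n, s12 q • v n = μμ q lam n • v n := by
    intro n
    induction n with
    | zero => simpa [hv0, μμ] using h12
    | succ n ih =>
        calc s12 q • v (n + 1) = (s12 q * s22 q) • v n := by rw [hvsucc, mul_smul]
          _ = (q ^ 2)⁻¹ • ((s22 q * s12 q) • v n) := by rw [rel_tb, smul_assoc]
          _ = (q ^ 2)⁻¹ • (s22 q • (μμ q lam n • v n)) := by rw [mul_smul, ih]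
          _ = ((q ^ 2)⁻¹ * μμ q lam n) • (s22 q • v n) := by
              rw [usmul_csmul, smul_smul]
          _ = μμ q lam (n + 1) • v (n + 1) := by
              rw [← hvsucc]
              congr 1
              simp only [μμ, pp, pow_succ]
              ring
  -- s12inv acts diagonally
  have hμne : ∀ n, μμ q lam n ≠ 0 := μμ_ne_zero hq hlam
  -- s11 lowers
  have ha : ∀ n, s11 q • v n = cc q lam n • v (n - 1) := by
    intro n
    induction n with
    | zero => simp [cc_zero, hv0, h11]
    | succ n ih =>
        have e1 : ((s12 q) ^ 2) • v n = (μμ q lam n ^ 2) • v n := by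
          rw [pow_two, mul_smul, ht, usmul_csmul, ht, smul_smul, ← pow_two]
        have e2 : (((s12 q) ^ 2 - (q ^ 2 : ℂ) • 1) : Usp2 q) • v n
            = (μμ q lam n ^ 2 - q ^ 2) • v n := by
          rw [sub_smul, e1, smul_assoc, one_smul, ← sub_smul]
        have e3 : (s22 q * s11 q) • v n = cc q lam n • (s22 q • v (n - 1)) := by
          rw [mul_smul, ih, usmul_csmul]
        have hstep : s11 q • v (n + 1)
            = (pp q * cc q lam n) • (s22 q • v (n - 1))
              - ((q - q⁻¹) * (μμ q lam n ^ 2 - q ^ 2)) • v n := by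
          calc s11 q • v (n + 1) = (s11 q * s22 q) • v n := by rw [hvsucc, mul_smul]
            _ = ((q ^ 2)⁻¹ • (s22 q * s11 q)
                  - (q - q⁻¹) • ((s12 q) ^ 2 - (q ^ 2 : ℂ) • 1)) • v n := by rw [rel_main]
            _ = (q ^ 2)⁻¹ • ((s22 q * s11 q) • v n)
                  - (q - q⁻¹) • ((((s12 q) ^ 2 - (q ^ 2 : ℂ) • 1) : Usp2 q) • v n) := by
                rw [sub_smul, smul_assoc, smul_assoc]
            _ = (pp q * cc q lam n) • (s22 q • v (n - 1))
                  - ((q - q⁻¹) * (μμ q lam n ^ 2 - q ^ 2)) • v n := by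
                rw [e3, e2]
                simp only [smul_smul, pp]
        cases n with
        | zero =>
            rw [hstep, cc_succ hq, cc_zero]
            norm_num
        | succ k =>
            rw [hstep]
            have : (k + 1 : ℕ) - 1 = k := rfl
            rw [this, ← hvsucc, ← sub_smul, ← cc_succ hq]
            simp
  -- key consequence
  have hweight : ∀ n, v n ≠ 0 → v (n + 1) = 0 → cc q lam (n + 1) = 0 := by
    intro n h1 h2
    have h3 := ha (n + 1)
    rw [h2, smul_zero] at h3
    have h4 : (n + 1 : ℕ) - 1 = n := rfl
    rw [h4] at h3
    rcases smul_eq_zero.1 h3.symm with h | h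
    · exact h
    · exact absurd h h1
  -- eigenvector structure
  have hT : ∀ n, v n ∈ Module.End.eigenspace (lsmulU (L := L) (s12 q)) (μμ q lam n) := by
    intro n
    exact Module.End.mem_eigenspace_iff.2 (ht n)
  have hT' : ∀ n, (lsmulU (L := L) (s12 q)) (v n) = μμ q lam n • v n := ht
  have hinj := μμ_inj hq hlam hroot

  have hinv' : ∀ n, s12inv q • v n = (μμ q lam n)⁻¹ • v n := by
    intro n
    have h1 : s12inv q • (s12 q • v n) = v n := by
      rw [← mul_smul, rel_inv_left, one_smul]
    rw [ht, usmul_csmul] at h1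
    have h2 := congrArg (fun y => (μμ q lam n)⁻¹ • y) h1
    simpa [smul_smul, inv_mul_cancel₀ (hμne n)] using h2
  -- generic stability of spans
  have hgen : ∀ (S' : Set L) (u : Usp2 q), (∀ s ∈ S', u • s ∈ Submodule.span ℂ S') →
      ∀ x ∈ Submodule.span ℂ S', u • x ∈ Submodule.span ℂ S' := by
    intro S' u hu x hx
    have hmap : (Submodule.span ℂ S').map (lsmulU (L := L) u) ≤ Submodule.span ℂ S' := by
      rw [Submodule.map_span, Submodule.span_le]
      rintro _ ⟨s, hs, rfl⟩
      exact hu s hs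
    exact hmap ⟨x, hx, rfl⟩
  -- forward direction
  have main1 : FiniteDimensional ℂ L → ∃ m : ℕ, 0 < m ∧ (lam = q ^ m ∨ lam = -q ^ m) := by
    intro hfd
    haveI : Module.Finite ℂ L := hfd
    have hex : ∃ n, v n = 0 := by
      by_contra hno
      push_neg at hno
      have hli : LinearIndependent ℂ v :=
        Module.End.eigenvectors_linearIndependent' (lsmulU (L := L) (s12 q)) (μμ q lam)
          hinj v (fun n => ⟨hT n, hno n⟩)
      exact Module.Finite.not_linearIndependent_of_infinite v hli
    have hm0 : Nat.find hex ≠ 0 := by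
      intro h0
      have hsp := Nat.find_spec hex
      rw [h0, hv0] at hsp
      exact hξ hsp
    obtain ⟨k, hk⟩ : ∃ k, Nat.find hex = k + 1 := ⟨Nat.find hex - 1, by omega⟩
    have hvk : v k ≠ 0 := Nat.find_min hex (by omega)
    have hvk1 : v (k + 1) = 0 := by rw [← hk]; exact Nat.find_spec hex
    exact ⟨k + 1, Nat.succ_pos k,
      (cc_eq_zero_iff hq hroot lam (Nat.succ_pos k)).1 (hweight k hvk hvk1)⟩
  -- backward direction, with dimension count
  have main2 : ∀ m : ℕ, 0 < m → (lam = q ^ m ∨ lam = -q ^ m) →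
      FiniteDimensional ℂ L ∧ Module.finrank ℂ L = m := by
    intro m hm hlm
    have hccm : cc q lam m = 0 := (cc_eq_zero_iff hq hroot lam hm).2 hlm
    have e2 : lam ^ 2 = q ^ (m * 2) := by
      rw [pow_mul]
      rcases hlm with h | h <;> rw [h] <;> ring
    -- v k ≠ 0 for k < m
    have hvne : ∀ k, k < m → v k ≠ 0 := by
      intro k hk hvk
      have hex : ∃ n, v n = 0 := ⟨k, hvk⟩
      have hj0 : v (Nat.find hex) = 0 := Nat.find_spec hex
      have hjle : Nat.find hex ≤ k := Nat.find_min' hex hvk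
      have hjpos : Nat.find hex ≠ 0 := by
        intro h0; rw [h0, hv0] at hj0; exact hξ hj0
      obtain ⟨i, hi⟩ : ∃ i, Nat.find hex = i + 1 := ⟨Nat.find hex - 1, by omega⟩
      have hvi : v i ≠ 0 := Nat.find_min hex (by omega)
      have hcc : cc q lam (i + 1) = 0 := hweight i hvi (by rw [← hi]; exact hj0)
      have h1 : lam = q ^ (i + 1) ∨ lam = -q ^ (i + 1) :=
        (cc_eq_zero_iff hq hroot lam (Nat.succ_pos i)).1 hcc
      have e1 : lam ^ 2 = q ^ ((i + 1) * 2) := by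
        rw [pow_mul]
        rcases h1 with h | h <;> rw [h] <;> ring
      have h3 : q ^ ((i + 1) * 2) * q ^ (m * 2 - (i + 1) * 2) = q ^ ((i + 1) * 2) * 1 := by
        rw [mul_one, ← pow_add]
        have harith : (i + 1) * 2 + (m * 2 - (i + 1) * 2) = m * 2 := by omega
        rw [harith, ← e2, e1]
      have h4 := mul_left_cancel₀ (pow_ne_zero _ hq) h3
      exact hroot _ (by omega) h4
    -- the tail span
    set S : Set L := v '' {n | m ≤ n} with hS
    set N : Submodule ℂ L := Submodule.span ℂ S with hN
    have hmemS : ∀ n, m ≤ n → v n ∈ N := fun n hn => Submodule.subset_span ⟨n, hn, rfl⟩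
    have hstab : ∀ u : Usp2 q, ∀ x ∈ N, u • x ∈ N := by
      have c22 : ∀ s ∈ S, s22 q • s ∈ N := by
        rintro _ ⟨n, hn, rfl⟩
        rw [← hvsucc]
        have hn' : m ≤ n := hn
        exact hmemS _ (by omega)
      have c12 : ∀ s ∈ S, s12 q • s ∈ N := by
        rintro _ ⟨n, hn, rfl⟩
        rw [ht]
        exact N.smul_mem _ (hmemS _ hn)
      have cinv : ∀ s ∈ S, s12inv q • s ∈ N := by
        rintro _ ⟨n, hn, rfl⟩
        rw [hinv']
        exact N.smul_mem _ (hmemS _ hn)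
      have c11 : ∀ s ∈ S, s11 q • s ∈ N := by
        rintro _ ⟨n, hn, rfl⟩
        rw [ha]
        have hn' : m ≤ n := hn
        rcases eq_or_lt_of_le hn' with h | h
        · rw [← h, hccm, zero_smul]; exact N.zero_mem
        · exact N.smul_mem _ (hmemS _ (by omega))
      exact stable N (fun x hx => hgen S _ c11 x hx) (fun x hx => hgen S _ c22 x hx)
        (fun x hx => hgen S _ c12 x hx) (fun x hx => hgen S _ cinv x hx)
    have hξnotN : ξ ∉ N := by
      intro hin
      have hd := Module.End.eigenspaces_iSupIndep (lsmulU (L := L) (s12 q))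
      have hdis := hd (μμ q lam 0)
      have hNle : N ≤ ⨆ (ν : ℂ) (_ : ν ≠ μμ q lam 0),
          Module.End.eigenspace (lsmulU (L := L) (s12 q)) ν := by
        rw [hN, Submodule.span_le]
        rintro _ ⟨n, hn, rfl⟩
        have hn' : m ≤ n := hn
        have hne : μμ q lam n ≠ μμ q lam 0 := fun h => by
          have := hinj h; omega
        exact Submodule.mem_iSup_of_mem (μμ q lam n) (Submodule.mem_iSup_of_mem hne (hT n))
      have hbot : ξ ∈ (⊥ : Submodule ℂ L) :=
        hdis.le_bot (Submodule.mem_inf.2 ⟨by rw [← hv0]; exact hT 0, hNle hin⟩)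
      exact hξ (by simpa using hbot)
    have hvm : v m = 0 := by
      rcases hsimple.eq_bot_or_eq_top (liftSub N hstab) with hb | htop
      · have hmem : v m ∈ liftSub N hstab := hmemS m le_rfl
        rw [hb] at hmem
        simpa using hmem
      · exact absurd (mem_liftSub.1 (htop ▸ Submodule.mem_top)) hξnotN
    have hvge : ∀ n, m ≤ n → v n = 0 := by
      have hplus : ∀ k, v (m + k) = 0 := by
        intro k
        induction k with
        | zero => simpa using hvm
        | succ k ih =>
            have : m + (k + 1) = (m + k) + 1 := rfl
            rw [this, hvsucc, ih, smul_zero]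
      intro n hn
      have : n = m + (n - m) := by omega
      rw [this]
      exact hplus _
    -- the head span is everything
    set P : Submodule ℂ L := Submodule.span ℂ (Set.range fun i : Fin m => v i) with hP
    have hPmem : ∀ i : ℕ, i < m → v i ∈ P := fun i hi =>
      Submodule.subset_span ⟨⟨i, hi⟩, rfl⟩
    have hPall : ∀ n : ℕ, v n ∈ P := by
      intro n
      rcases lt_or_ge n m with h | h
      · exact hPmem n h
      · rw [hvge n h]; exact P.zero_mem
    have hPstab : ∀ u : Usp2 q, ∀ x ∈ P, u • x ∈ P := by
      have c22 : ∀ s ∈ Set.range (fun i : Fin m => v i), s22 q • s ∈ P := by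
        rintro _ ⟨i, rfl⟩
        rw [← hvsucc]
        exact hPall _
      have c12 : ∀ s ∈ Set.range (fun i : Fin m => v i), s12 q • s ∈ P := by
        rintro _ ⟨i, rfl⟩
        rw [ht]
        exact P.smul_mem _ (hPall _)
      have cinv : ∀ s ∈ Set.range (fun i : Fin m => v i), s12inv q • s ∈ P := by
        rintro _ ⟨i, rfl⟩
        rw [hinv']
        exact P.smul_mem _ (hPall _)
      have c11 : ∀ s ∈ Set.range (fun i : Fin m => v i), s11 q • s ∈ P := by
        rintro _ ⟨i, rfl⟩
        rw [ha]
        exact P.smul_mem _ (hPall _)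
      exact stable P (fun x hx => hgen _ _ c11 x hx) (fun x hx => hgen _ _ c22 x hx)
        (fun x hx => hgen _ _ c12 x hx) (fun x hx => hgen _ _ cinv x hx)
    have hPtop : P = ⊤ := by
      rcases hsimple.eq_bot_or_eq_top (liftSub P hPstab) with hb | htop
      · exfalso
        have hmem : ξ ∈ liftSub P hPstab := by
          rw [← hv0]
          exact hPall 0
        rw [hb] at hmem
        exact hξ (by simpa using hmem)
      · rw [eq_top_iff]
        intro x _
        exact mem_liftSub.1 (htop ▸ Submodule.mem_top)
    have hli : LinearIndependent ℂ (fun i : Fin m => v i) :=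
      Module.End.eigenvectors_linearIndependent' (lsmulU (L := L) (s12 q))
        (fun i : Fin m => μμ q lam i) (fun a b h => Fin.val_injective (hinj h)) _
        (fun i => ⟨hT i, hvne i i.2⟩)
    let B : Module.Basis (Fin m) ℂ L := Module.Basis.mk hli (by rw [← hP]; exact hPtop.ge)
    haveI hfd : FiniteDimensional ℂ L := Module.Finite.of_basis B
    refine ⟨hfd, ?_⟩
    rw [Module.finrank_eq_card_basis B, Fintype.card_fin]
  refine ⟨⟨main1, ?_⟩, fun m hm hl _ => (main2 m hm hl).2⟩
  rintro ⟨m, hm, hl⟩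
  exact (main2 m hm hl).1

/-- The irreducible highest weight module `L(λ)` over `U'_q(sp₂)` (with `q` not a
root of unity) is finite-dimensional if and only if `λ = σ q^m` for a positive
integer `m` and `σ ∈ {−1,1}`; in that case `dim L(λ) = m`. -/
theorem sp2_fd_iff (q : ℂ) (hq : q ≠ 0) (hroot : ∀ m : ℕ, 0 < m → q ^ m ≠ 1)
    (lam : ℂ) (hlam : lam ≠ 0)
    (L : Type) [AddCommGroup L] [Module ℂ L] [Module (Usp2 q) L]
    [IsScalarTower ℂ (Usp2 q) L]
    (hsimple : IsSimpleModule (Usp2 q) L)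
    (ξ : L) (hξ : ξ ≠ 0) (h11 : s11 q • ξ = 0) (h12 : s12 q • ξ = lam • ξ) :
    (FiniteDimensional ℂ L ↔ ∃ m : ℕ, 0 < m ∧ (lam = q ^ m ∨ lam = -q ^ m)) ∧
    ∀ m : ℕ, 0 < m → (lam = q ^ m ∨ lam = -q ^ m) → FiniteDimensional ℂ L →
      Module.finrank ℂ L = m := by
  exact sp2_fd_iff' q hq hroot lam hlam L hsimple ξ hξ h11 h12

end
end
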